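/- Let E be a real Banach space with continuous dual E*, and let V be the smallest subset of the space ℝ^(E*) of all functions E* → ℝ (with pointwise operations, order, and product) containing the evaluation maps δ_x(x*) = x*(x) for x ∈ E that is a linear subspace closed under pointwise products and pointwise binary suprema. Let 𝒩 be the set of all seminorms ν on V satisfying: |f| ≤ |g| pointwise implies ν(f) ≤ ν(g); ν(f·g) ≤ ν(f)·ν(g); and ν(δ_x) ≤ ‖x‖ for all x ∈ E. Then for every f ∈ V the quantity ρ(f) = sup{ν(f) : ν ∈ 𝒩} is finite, and ρ(f) = 0 if and only if f(x*) = 0 for every x* ∈ E* with ‖x*‖ ≤ 1. -/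

import Mathlib

set_option synthInstance.maxHeartbeats 1000000
set_option maxHeartbeats 1000000


/-- A subset of the function space `W → ℝ` (with pointwise operations, order and
product) which is a linear subspace closed under pointwise products and pointwise
binary suprema. -/
def IsSublatticeSubalgebra {W : Type} (S : Set (W → ℝ)) : Prop :=
  (0 : W → ℝ) ∈ S ∧
  (∀ f g, f ∈ S → g ∈ S → f + g ∈ S) ∧
  (∀ (c : ℝ) (f), f ∈ S → c • f ∈ S) ∧
  (∀ f g, f ∈ S → g ∈ S → f * g ∈ S) ∧
  (∀ f g, f ∈ S → g ∈ S → f ⊔ g ∈ S)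

/-- The smallest sublattice-subalgebra of `W → ℝ` containing `G`. -/
def latAlgGen {W : Type} (G : Set (W → ℝ)) : Set (W → ℝ) :=
  ⋂₀ {S | IsSublatticeSubalgebra S ∧ G ⊆ S}

/-- The evaluation map `δ_x : E* → ℝ`, `δ_x x* = x* x`. -/
def evalMapD (E : Type) [NormedAddCommGroup E] [NormedSpace ℝ E] (x : E) :
    (E →L[ℝ] ℝ) → ℝ :=
  fun φ => φ x

/-- The sublattice-subalgebra of `ℝ^(E*)` generated by the evaluation maps. -/
def freeVLA (E : Type) [NormedAddCommGroup E] [NormedSpace ℝ E] :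
    Set ((E →L[ℝ] ℝ) → ℝ) :=
  latAlgGen (Set.range (evalMapD E))

/-- The seminorms on `V = freeVLA E` considered in the construction of the free
normed f-algebra: lattice seminorms which are submultiplicative and satisfy
`ν (δ_x) ≤ ‖x‖`. -/
def IsGoodSeminorm (E : Type) [NormedAddCommGroup E] [NormedSpace ℝ E]
    (ν : {f : (E →L[ℝ] ℝ) → ℝ // f ∈ freeVLA E} → ℝ) : Prop :=
  (∀ f, 0 ≤ ν f) ∧
  -- subadditivity
  (∀ (f g : (E →L[ℝ] ℝ) → ℝ) (hf : f ∈ freeVLA E) (hg : g ∈ freeVLA E)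
      (hfg : f + g ∈ freeVLA E), ν ⟨f + g, hfg⟩ ≤ ν ⟨f, hf⟩ + ν ⟨g, hg⟩) ∧
  -- absolute homogeneity
  (∀ (c : ℝ) (f : (E →L[ℝ] ℝ) → ℝ) (hf : f ∈ freeVLA E)
      (hcf : c • f ∈ freeVLA E), ν ⟨c • f, hcf⟩ = |c| * ν ⟨f, hf⟩) ∧
  -- lattice seminorm: `|f| ≤ |g|` pointwise implies `ν f ≤ ν g`
  (∀ (f g : {f : (E →L[ℝ] ℝ) → ℝ // f ∈ freeVLA E}),
      (∀ φ, |f.1 φ| ≤ |g.1 φ|) → ν f ≤ ν g) ∧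
  -- submultiplicativity
  (∀ (f g : (E →L[ℝ] ℝ) → ℝ) (hf : f ∈ freeVLA E) (hg : g ∈ freeVLA E)
      (hfg : f * g ∈ freeVLA E), ν ⟨f * g, hfg⟩ ≤ ν ⟨f, hf⟩ * ν ⟨g, hg⟩) ∧
  -- `ν (δ_x) ≤ ‖x‖`
  (∀ (x : E) (hx : evalMapD E x ∈ freeVLA E), ν ⟨evalMapD E x, hx⟩ ≤ ‖x‖)

namespace Stmt3Aux

variable {W : Type}

lemma isSub_latAlgGen (G : Set (W → ℝ)) : IsSublatticeSubalgebra (latAlgGen G) := by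
  refine ⟨?_, ?_, ?_, ?_, ?_⟩
  · intro S hS; exact hS.1.1
  · intro f g hf hg S hS; exact hS.1.2.1 f g (hf S hS) (hg S hS)
  · intro c f hf S hS; exact hS.1.2.2.1 c f (hf S hS)
  · intro f g hf hg S hS; exact hS.1.2.2.2.1 f g (hf S hS) (hg S hS)
  · intro f g hf hg S hS; exact hS.1.2.2.2.2 f g (hf S hS) (hg S hS)

lemma subset_latAlgGen (G : Set (W → ℝ)) : G ⊆ latAlgGen G :=
  fun _ hf S hS => hS.2 hf

lemma latAlgGen_le {G S : Set (W → ℝ)} (h1 : IsSublatticeSubalgebra S) (h2 : G ⊆ S) :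
    latAlgGen G ⊆ S := fun _ hf => hf S ⟨h1, h2⟩

lemma latAlgGen_mono {G G' : Set (W → ℝ)} (h : G ⊆ G') : latAlgGen G ⊆ latAlgGen G' :=
  latAlgGen_le (isSub_latAlgGen G') (h.trans (subset_latAlgGen G'))

lemma abs_mem {S : Set (W → ℝ)} (hS : IsSublatticeSubalgebra S) {f} (hf : f ∈ S) :
    (fun w => |f w|) ∈ S := by
  have h : (fun w => |f w|) = f ⊔ ((-1 : ℝ) • f) := by
    funext w
    simp only [Pi.sup_apply, Pi.smul_apply, smul_eq_mul, neg_one_mul]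
    exact abs_eq_max_neg ..
  rw [h]
  exact hS.2.2.2.2 _ _ hf (hS.2.2.1 (-1) f hf)

variable {E : Type} [NormedAddCommGroup E] [NormedSpace ℝ E]

lemma isSub_freeVLA : IsSublatticeSubalgebra (freeVLA E) := isSub_latAlgGen _

lemma delta_mem (x : E) : evalMapD E x ∈ freeVLA E :=
  subset_latAlgGen _ ⟨x, rfl⟩

/-- congruence for seminorm values -/
lemma nu_congr (ν : {f : (E →L[ℝ] ℝ) → ℝ // f ∈ freeVLA E} → ℝ)
    {f g : (E →L[ℝ] ℝ) → ℝ} {hf : f ∈ freeVLA E} {hg : g ∈ freeVLA E} (h : f = g) :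
    ν ⟨f, hf⟩ = ν ⟨g, hg⟩ := by subst h; rfl

section Good
variable {ν : {f : (E →L[ℝ] ℝ) → ℝ // f ∈ freeVLA E} → ℝ} (hν : IsGoodSeminorm E ν)
include hν

lemma nu_zero : ν ⟨0, isSub_freeVLA.1⟩ = 0 := by
  have hh : (0 : ℝ) • (0 : (E →L[ℝ] ℝ) → ℝ) ∈ freeVLA E :=
    isSub_freeVLA.2.2.1 0 0 isSub_freeVLA.1
  have h := hν.2.2.1 0 0 isSub_freeVLA.1 hh
  have e : ν ⟨(0 : ℝ) • (0 : (E →L[ℝ] ℝ) → ℝ), hh⟩ = ν ⟨0, isSub_freeVLA.1⟩ :=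
    nu_congr ν (zero_smul ℝ 0)
  rw [e] at h
  simpa using h

lemma nu_abs {f : (E →L[ℝ] ℝ) → ℝ} (hf : f ∈ freeVLA E) :
    ν ⟨fun w => |f w|, abs_mem isSub_freeVLA hf⟩ = ν ⟨f, hf⟩ := by
  apply le_antisymm
  · exact hν.2.2.2.1 _ _ (fun φ => by simp)
  · exact hν.2.2.2.1 _ _ (fun φ => by simp)

end Good

lemma bddAbove_nu (f : {f : (E →L[ℝ] ℝ) → ℝ // f ∈ freeVLA E}) :
    BddAbove {r : ℝ | ∃ ν, IsGoodSeminorm E ν ∧ r = ν f} := by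
  classical
  set Sb : Set ((E →L[ℝ] ℝ) → ℝ) :=
    {g | ∃ hg : g ∈ freeVLA E, ∃ B : ℝ, 0 ≤ B ∧
      ∀ ν, IsGoodSeminorm E ν → ν ⟨g, hg⟩ ≤ B} with hSbdef
  have hmem : ∀ g ∈ freeVLA E, g ∈ Sb := by
    apply latAlgGen_le
    · refine ⟨?_, ?_, ?_, ?_, ?_⟩
      · exact ⟨isSub_freeVLA.1, 0, le_refl 0, fun ν hν => le_of_eq (nu_zero hν)⟩
      · rintro g h ⟨hg, Bg, hBg0, hBg⟩ ⟨hh, Bh, hBh0, hBh⟩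
        refine ⟨isSub_freeVLA.2.1 g h hg hh, Bg + Bh, by linarith, fun ν hν => ?_⟩
        exact le_trans (hν.2.1 g h hg hh _) (add_le_add (hBg ν hν) (hBh ν hν))
      · rintro c g ⟨hg, Bg, hBg0, hBg⟩
        refine ⟨isSub_freeVLA.2.2.1 c g hg, |c| * Bg, by positivity, fun ν hν => ?_⟩
        rw [hν.2.2.1 c g hg]
        exact mul_le_mul_of_nonneg_left (hBg ν hν) (abs_nonneg c)
      · rintro g h ⟨hg, Bg, hBg0, hBg⟩ ⟨hh, Bh, hBh0, hBh⟩
        refine ⟨isSub_freeVLA.2.2.2.1 g h hg hh, Bg * Bh, by positivity, fun ν hν => ?_⟩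
        exact le_trans (hν.2.2.2.2.1 g h hg hh _)
          (mul_le_mul (hBg ν hν) (hBh ν hν) (hν.1 _) hBg0)
      · rintro g h ⟨hg, Bg, hBg0, hBg⟩ ⟨hh, Bh, hBh0, hBh⟩
        have hag := abs_mem isSub_freeVLA hg
        have hah := abs_mem isSub_freeVLA hh
        have hsum : (fun w => |g w|) + (fun w => |h w|) ∈ freeVLA E :=
          isSub_freeVLA.2.1 _ _ hag hah
        refine ⟨isSub_freeVLA.2.2.2.2 g h hg hh, Bg + Bh, by linarith, fun ν hν => ?_⟩
        have h1 : ν ⟨g ⊔ h, isSub_freeVLA.2.2.2.2 g h hg hh⟩ ≤ ν ⟨(fun w => |g w|) + (fun w => |h w|), hsum⟩ := by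
          apply hν.2.2.2.1
          intro φ
          simp only [Pi.sup_apply, Pi.add_apply]
          have h2 : |g φ| + |h φ| = |(|g φ| + |h φ|)| := (abs_of_nonneg (by positivity)).symm
          rw [← h2]
          apply abs_le.mpr
          constructor
          · have h4 : g φ ≤ g φ ⊔ h φ := le_sup_left
            have := neg_abs_le (g φ)
            have := abs_nonneg (h φ)
            linarith
          · exact sup_le (by linarith [le_abs_self (g φ), abs_nonneg (h φ)])
              (by linarith [le_abs_self (h φ), abs_nonneg (g φ)])
        have h3 : ν ⟨(fun w => |g w|) + (fun w => |h w|), hsum⟩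
            ≤ ν ⟨fun w => |g w|, hag⟩ + ν ⟨fun w => |h w|, hah⟩ := hν.2.1 _ _ hag hah hsum
        rw [nu_abs hν hg, nu_abs hν hh] at h3
        exact le_trans h1 (le_trans h3 (add_le_add (hBg ν hν) (hBh ν hν)))
    · rintro g ⟨x, rfl⟩
      exact ⟨delta_mem x, ‖x‖, norm_nonneg x, fun ν hν => hν.2.2.2.2.2 x _⟩
  obtain ⟨hg, B, hB0, hB⟩ := hmem f.1 f.2
  refine ⟨B, ?_⟩
  rintro r ⟨ν, hν, rfl⟩
  have : (⟨f.1, hg⟩ : {f : (E →L[ℝ] ℝ) → ℝ // f ∈ freeVLA E}) = f := Subtype.ext rfl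
  rw [← this]
  exact hB ν hν

lemma bounded_on_ball {g : (E →L[ℝ] ℝ) → ℝ} (hg : g ∈ freeVLA E) :
    ∃ C : ℝ, ∀ φ : E →L[ℝ] ℝ, ‖φ‖ ≤ 1 → |g φ| ≤ C := by
  have hsub : freeVLA E ⊆ {g | ∃ C : ℝ, ∀ φ : E →L[ℝ] ℝ, ‖φ‖ ≤ 1 → |g φ| ≤ C} := by
    apply latAlgGen_le
    · refine ⟨⟨0, fun φ _ => by simp⟩, ?_, ?_, ?_, ?_⟩
      · rintro g h ⟨C, hC⟩ ⟨D, hD⟩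
        exact ⟨C + D, fun φ hφ => le_trans (abs_add_le _ _)
          (add_le_add (hC φ hφ) (hD φ hφ))⟩
      · rintro c g ⟨C, hC⟩
        refine ⟨|c| * C, fun φ hφ => ?_⟩
        rw [Pi.smul_apply, smul_eq_mul, abs_mul]
        exact mul_le_mul_of_nonneg_left (hC φ hφ) (abs_nonneg c)
      · rintro g h ⟨C, hC⟩ ⟨D, hD⟩
        have hC0 : 0 ≤ C := le_trans (abs_nonneg _) (hC 0 (by simp))
        refine ⟨C * D, fun φ hφ => ?_⟩
        rw [Pi.mul_apply, abs_mul]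
        exact mul_le_mul (hC φ hφ) (hD φ hφ) (abs_nonneg _) hC0
      · rintro g h ⟨C, hC⟩ ⟨D, hD⟩
        refine ⟨C + D, fun φ hφ => ?_⟩
        rw [Pi.sup_apply]
        apply abs_le.mpr
        constructor
        · have h4 : g φ ≤ g φ ⊔ h φ := le_sup_left
          have := neg_abs_le (g φ)
          have h5 := hC φ hφ
          have h6 := le_trans (abs_nonneg (h φ)) (hD φ hφ)
          linarith
        · have h5 := hC φ hφ
          have h6 := hD φ hφ
          have h7 := le_trans (abs_nonneg (h φ)) h6
          have h8 := le_trans (abs_nonneg (g φ)) h5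
          exact sup_le (by linarith [le_abs_self (g φ)])
            (by linarith [le_abs_self (h φ)])
    · rintro _ ⟨x, rfl⟩
      refine ⟨‖x‖, fun φ hφ => ?_⟩
      show |φ x| ≤ ‖x‖
      have := φ.le_opNorm x
      have h1 : |φ x| = ‖φ x‖ := (Real.norm_eq_abs _).symm
      have : ‖φ x‖ ≤ ‖φ‖ * ‖x‖ := this
      nlinarith [norm_nonneg x, norm_nonneg φ]
  exact hsub hg

noncomputable def mu (f : {f : (E →L[ℝ] ℝ) → ℝ // f ∈ freeVLA E}) : ℝ :=
  sSup {r : ℝ | ∃ φ : E →L[ℝ] ℝ, ‖φ‖ ≤ 1 ∧ r = |f.1 φ|}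

lemma mu_bdd (f : {f : (E →L[ℝ] ℝ) → ℝ // f ∈ freeVLA E}) :
    BddAbove {r : ℝ | ∃ φ : E →L[ℝ] ℝ, ‖φ‖ ≤ 1 ∧ r = |f.1 φ|} := by
  obtain ⟨C, hC⟩ := bounded_on_ball f.2
  exact ⟨C, by rintro r ⟨φ, hφ, rfl⟩; exact hC φ hφ⟩

lemma le_mu (f : {f : (E →L[ℝ] ℝ) → ℝ // f ∈ freeVLA E}) {φ : E →L[ℝ] ℝ}
    (hφ : ‖φ‖ ≤ 1) : |f.1 φ| ≤ mu f :=
  le_csSup (mu_bdd f) ⟨φ, hφ, rfl⟩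

lemma mu_le (f : {f : (E →L[ℝ] ℝ) → ℝ // f ∈ freeVLA E}) {B : ℝ}
    (hB : ∀ φ : E →L[ℝ] ℝ, ‖φ‖ ≤ 1 → |f.1 φ| ≤ B) : mu f ≤ B := by
  refine csSup_le ?_ ?_
  · exact ⟨|f.1 0|, ⟨0, by simp, rfl⟩⟩
  · rintro r ⟨φ, hφ, rfl⟩
    exact hB φ hφ

lemma mu_nonneg (f : {f : (E →L[ℝ] ℝ) → ℝ // f ∈ freeVLA E}) : 0 ≤ mu f :=
  le_trans (abs_nonneg _) (le_mu f (φ := 0) (by simp))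

lemma mu_good : IsGoodSeminorm E (mu (E := E)) := by
  refine ⟨fun f => mu_nonneg f, ?_, ?_, ?_, ?_, ?_⟩
  · intro f g hf hg hfg
    apply mu_le
    intro φ hφ
    calc |(f + g) φ| ≤ |f φ| + |g φ| := abs_add_le _ _
      _ ≤ mu ⟨f, hf⟩ + mu ⟨g, hg⟩ := add_le_add (le_mu ⟨f, hf⟩ hφ) (le_mu ⟨g, hg⟩ hφ)
  · intro c f hf hcf
    apply le_antisymm
    · apply mu_le
      intro φ hφ
      show |(c • f) φ| ≤ _
      rw [Pi.smul_apply, smul_eq_mul, abs_mul]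
      exact mul_le_mul_of_nonneg_left (le_mu ⟨f, hf⟩ hφ) (abs_nonneg c)
    · rcases eq_or_ne c 0 with rfl | hc
      · rw [abs_zero, zero_mul]; exact mu_nonneg _
      · have hcpos : (0 : ℝ) < |c| := abs_pos.mpr hc
        have h1 : mu ⟨f, hf⟩ ≤ mu ⟨c • f, hcf⟩ / |c| := by
          apply mu_le
          intro φ hφ
          rw [le_div_iff₀ hcpos]
          have : |f φ| * |c| = |(c • f) φ| := by
            rw [Pi.smul_apply, smul_eq_mul, abs_mul]; ring
          rw [this]
          exact le_mu ⟨c • f, hcf⟩ hφ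
        calc |c| * mu ⟨f, hf⟩ ≤ |c| * (mu ⟨c • f, hcf⟩ / |c|) :=
              mul_le_mul_of_nonneg_left h1 (abs_nonneg c)
          _ = mu ⟨c • f, hcf⟩ := by field_simp
  · intro f g hfg
    apply mu_le
    intro φ hφ
    exact le_trans (hfg φ) (le_mu g hφ)
  · intro f g hf hg hfg
    apply mu_le
    intro φ hφ
    show |(f * g) φ| ≤ _
    rw [Pi.mul_apply, abs_mul]
    exact mul_le_mul (le_mu ⟨f, hf⟩ hφ) (le_mu ⟨g, hg⟩ hφ) (abs_nonneg _) (mu_nonneg _)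
  · intro x hx
    apply mu_le
    intro φ hφ
    have := φ.le_opNorm x
    have h1 : |φ x| = ‖φ x‖ := (Real.norm_eq_abs _).symm
    have h2 : |evalMapD E x φ| = |φ x| := rfl
    rw [h2, h1]
    nlinarith [norm_nonneg x, norm_nonneg φ, φ.le_opNorm x]

/-! ### list max lemmas -/

lemma foldr_max_nonneg (L : List ℝ) : 0 ≤ L.foldr max 0 := by
  induction L with
  | nil => simp
  | cons a L ih => exact le_trans ih (le_max_right _ _)

lemma le_foldr_max {L : List ℝ} {a : ℝ} (h : a ∈ L) : a ≤ L.foldr max 0 := by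
  induction L with
  | nil => cases h
  | cons b L ih =>
    rcases List.mem_cons.mp h with rfl | h
    · exact le_max_left _ _
    · exact le_trans (ih h) (le_max_right _ _)

lemma foldr_max_le {L : List ℝ} {B : ℝ} (hB : 0 ≤ B) (h : ∀ a ∈ L, a ≤ B) :
    L.foldr max 0 ≤ B := by
  induction L with
  | nil => simpa
  | cons a L ih =>
    exact max_le (h a (List.mem_cons_self)) (ih fun b hb => h b (List.mem_cons_of_mem a hb))

lemma foldr_max_pow_le_sum {L : List ℝ} (h : ∀ a ∈ L, 0 ≤ a) {k : ℕ} (hk : k ≠ 0) :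
    (L.foldr max 0) ^ k ≤ (L.map (· ^ k)).sum := by
  induction L with
  | nil => simp [zero_pow hk]
  | cons a L ih =>
    have hL : ∀ b ∈ L, 0 ≤ b := fun b hb => h b (List.mem_cons_of_mem a hb)
    have ha : 0 ≤ a := h a (List.mem_cons_self)
    have h0 := foldr_max_nonneg L
    have hsum : 0 ≤ (L.map (· ^ k)).sum := by
      apply List.sum_nonneg
      intro b hb
      obtain ⟨c, hc, rfl⟩ := List.mem_map.mp hb
      exact pow_nonneg (hL c hc) k
    simp only [List.foldr_cons, List.map_cons, List.sum_cons]
    rcases max_cases a (L.foldr max 0) with ⟨he, _⟩ | ⟨he, _⟩ <;> rw [he]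
    · exact le_add_of_nonneg_right hsum
    · exact le_trans (ih hL) (le_add_of_nonneg_left (pow_nonneg ha k))

/-! ### compactness lemmas -/

lemma small_band {X : Type} [NormedAddCommGroup X] [NormedSpace ℝ X] [ProperSpace X]
    {F : X → ℝ} (hF : Continuous F) (h0 : ∀ t : X, ‖t‖ ≤ 1 → F t = 0) {δ : ℝ} (hδ : 0 < δ) :
    ∃ s : ℝ, 1 < s ∧ s ≤ 2 ∧ ∀ t : X, ‖t‖ ≤ s → |F t| ≤ δ := by
  set C := {t : X | ‖t‖ ≤ 2 ∧ δ ≤ |F t|} with hCdef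
  have hCclosed : IsClosed C :=
    IsClosed.inter (isClosed_le continuous_norm continuous_const)
      (isClosed_le continuous_const hF.abs)
  have hCcompact : IsCompact C :=
    IsCompact.of_isClosed_subset (isCompact_closedBall (0 : X) 2) hCclosed
      (fun t ht => mem_closedBall_zero_iff.mpr ht.1)
  rcases C.eq_empty_or_nonempty with hC | hC
  · refine ⟨2, one_lt_two, le_refl 2, fun t ht => ?_⟩
    by_contra hcon
    push_neg at hcon
    have : t ∈ C := ⟨ht, hcon.le⟩
    rw [hC] at this
    exact this
  · obtain ⟨t₀, ht₀C, hmin⟩ := hCcompact.exists_isMinOn hC continuous_norm.continuousOn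
    have h1 : 1 < ‖t₀‖ := by
      by_contra h
      push_neg at h
      have hz := h0 t₀ h
      have := ht₀C.2
      rw [hz] at this
      simp at this
      linarith
    refine ⟨min ((1 + ‖t₀‖) / 2) 2, ?_, min_le_right _ _, ?_⟩
    · exact lt_min (by linarith) one_lt_two
    · intro t ht
      by_contra hcon
      push_neg at hcon
      have htC : t ∈ C := ⟨le_trans ht (min_le_right _ _), hcon.le⟩
      have h2 : ‖t₀‖ ≤ ‖t‖ := isMinOn_iff.mp hmin t htC
      have h3 : ‖t‖ ≤ (1 + ‖t₀‖) / 2 := le_trans ht (min_le_left _ _)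
      linarith

lemma covering (X : Type) [NormedAddCommGroup X] [NormedSpace ℝ X] (M : Submodule ℝ X)
    [FiniteDimensional ℝ ↥M] {η : ℝ} (hη : 0 < η) :
    ∃ l : List ↥M, (∀ y ∈ l, ‖(y : X)‖ ≤ 1) ∧
      ∀ t : ↥M →L[ℝ] ℝ, (1 - η) * ‖t‖ ≤ (l.map (fun y => |t y|)).foldr max 0 := by
  rcases le_or_gt 1 η with hη1 | hη1
  · refine ⟨[], by simp, fun t => ?_⟩
    simp only [List.map_nil, List.foldr_nil]
    have := norm_nonneg t
    nlinarith
  -- main case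
  haveI : ProperSpace (↥M →L[ℝ] ℝ) := FiniteDimensional.proper ℝ (↥M →L[ℝ] ℝ)
  have hstep : ∀ t : ↥M →L[ℝ] ℝ, t ∈ Metric.sphere (0 : ↥M →L[ℝ] ℝ) 1 →
      ∃ y : ↥M, ‖(y : X)‖ ≤ 1 ∧ 1 - η / 2 < |t y| := by
    intro t ht
    have htn : ‖t‖ = 1 := (mem_sphere_zero_iff_norm (E := ↥M →L[ℝ] ℝ)).mp ht
    by_contra hcon
    push_neg at hcon
    have : ‖t‖ ≤ 1 - η / 2 := by
      apply ContinuousLinearMap.opNorm_le_bound t (by linarith)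
      intro y
      rcases eq_or_ne y 0 with rfl | hy
      · simp
      · have hyn : (0 : ℝ) < ‖y‖ := norm_pos_iff.mpr hy
        have hu : ‖(‖y‖⁻¹ • y : ↥M)‖ ≤ 1 := by
          rw [norm_smul, norm_inv, norm_norm]
          rw [inv_mul_cancel₀ (ne_of_gt hyn)]
        have hthis := hcon (‖y‖⁻¹ • y) hu
        rw [map_smul] at hthis
        have h2 : |(‖y‖⁻¹ : ℝ) • t y| = ‖y‖⁻¹ * |t y| := by
          rw [smul_eq_mul, abs_mul, abs_inv, abs_norm]
        rw [h2] at hthis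
        have h3 : ‖t y‖ = |t y| := Real.norm_eq_abs _
        have hcc : ‖y‖ * ‖y‖⁻¹ = 1 := mul_inv_cancel₀ (ne_of_gt hyn)
        have h9 := mul_le_mul_of_nonneg_left hthis hyn.le
        rw [h3]
        nlinarith [abs_nonneg (t y)]
    linarith
  choose yy hyy1 hyy2 using hstep
  have hScompact : IsCompact (Metric.sphere (0 : ↥M →L[ℝ] ℝ) 1) := isCompact_sphere _ _
  have hcover : Metric.sphere (0 : ↥M →L[ℝ] ℝ) 1 ⊆
      ⋃ i : Metric.sphere (0 : ↥M →L[ℝ] ℝ) 1, Metric.ball (i : ↥M →L[ℝ] ℝ) (η / 2) := by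
    intro t ht
    exact Set.mem_iUnion.mpr ⟨⟨t, ht⟩, Metric.mem_ball_self (by linarith)⟩
  obtain ⟨I, hI⟩ := hScompact.elim_finite_subcover _ (fun _ => Metric.isOpen_ball) hcover
  refine ⟨I.toList.map (fun i => yy i.1 i.2), ?_, ?_⟩
  · intro y hy
    obtain ⟨i, _, rfl⟩ := List.mem_map.mp hy
    exact hyy1 i.1 i.2
  · intro t
    rcases eq_or_ne t 0 with rfl | ht0
    · have hz : ‖(0 : ↥M →L[ℝ] ℝ)‖ = 0 := norm_zero (E := ↥M →L[ℝ] ℝ)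
      rw [hz, mul_zero]
      exact foldr_max_nonneg _
    · have htn : (0 : ℝ) < ‖t‖ := by
        rcases (norm_nonneg t).lt_or_eq with h | h
        · exact h
        · exact absurd ((ContinuousLinearMap.opNorm_zero_iff t).mp h.symm) ht0
      set u : ↥M →L[ℝ] ℝ := ‖t‖⁻¹ • t with hu
      have huS : u ∈ Metric.sphere (0 : ↥M →L[ℝ] ℝ) 1 := by
        apply (mem_sphere_zero_iff_norm (E := ↥M →L[ℝ] ℝ)).mpr
        haveI : NormSMulClass ℝ (↥M →L[ℝ] ℝ) := NormedSpace.toNormSMulClass (𝕜 := ℝ) (E := ↥M →L[ℝ] ℝ)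
        have hns : ‖(‖t‖⁻¹ • t : ↥M →L[ℝ] ℝ)‖ = ‖(‖t‖⁻¹ : ℝ)‖ * ‖t‖ :=
          norm_smul (α := ℝ) (β := ↥M →L[ℝ] ℝ) ‖t‖⁻¹ t
        rw [hu, hns, Real.norm_eq_abs, abs_of_nonneg (inv_nonneg.mpr (norm_nonneg t))]
        exact inv_mul_cancel₀ (ne_of_gt htn)
      obtain ⟨i, hiI, hiball⟩ := Set.mem_iUnion₂.mp (hI huS)
      set y := yy i.1 i.2 with hy
      have h1 : 1 - η / 2 < |(i : ↥M →L[ℝ] ℝ) y| := hyy2 i.1 i.2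
      have h2 : ‖u - (i : ↥M →L[ℝ] ℝ)‖ < η / 2 := by
        have hb := Metric.mem_ball.mp hiball
        rw [dist_eq_norm (E := ↥M →L[ℝ] ℝ)] at hb
        exact hb
      have h3 : |u y - (i : ↥M →L[ℝ] ℝ) y| ≤ ‖u - (i : ↥M →L[ℝ] ℝ)‖ * ‖y‖ := by
        have := (u - (i : ↥M →L[ℝ] ℝ)).le_opNorm y
        simpa [Real.norm_eq_abs] using this
      have hyn : ‖y‖ ≤ 1 := hyy1 i.1 i.2
      have h4 : 1 - η < |u y| := by
        have habs : |(i : ↥M →L[ℝ] ℝ) y| - |u y| ≤ |u y - (i : ↥M →L[ℝ] ℝ) y| := by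
          rw [abs_sub_comm]
          exact abs_sub_abs_le_abs_sub _ _
        nlinarith [norm_nonneg (u - (i : ↥M →L[ℝ] ℝ)), abs_nonneg (u y)]
      have h5 : |u y| = ‖t‖⁻¹ * |t y| := by
        rw [hu]
        simp only [ContinuousLinearMap.smul_apply, smul_eq_mul, abs_mul, abs_inv]
        rw [abs_of_nonneg (norm_nonneg t)]
      have h6 : |t y| ∈ (I.toList.map (fun i => yy i.1 i.2)).map (fun y => |t y|) := by
        apply List.mem_map.mpr
        exact ⟨y, List.mem_map.mpr ⟨i, Finset.mem_toList.mpr hiI, rfl⟩, rfl⟩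
      have h7 := le_foldr_max h6
      have h8 : (1 - η) * ‖t‖ ≤ |t y| := by
        have := mul_le_mul_of_nonneg_right h4.le htn.le
        rw [h5] at this
        calc (1 - η) * ‖t‖ ≤ ‖t‖⁻¹ * |t y| * ‖t‖ := this
          _ = |t y| := by field_simp
      exact le_trans h8 h7

/-! ### finite generation and structural lemmas -/

lemma exists_finset_gen {f : (E →L[ℝ] ℝ) → ℝ} (hf : f ∈ freeVLA E) :
    ∃ A : Finset E, f ∈ latAlgGen (evalMapD E '' ↑A) := by
  classical
  have hsub : freeVLA E ⊆ {g | ∃ A : Finset E, g ∈ latAlgGen (evalMapD E '' ↑A)} := by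
    apply latAlgGen_le
    · refine ⟨⟨∅, (isSub_latAlgGen _).1⟩, ?_, ?_, ?_, ?_⟩
      · rintro g h ⟨A, hA⟩ ⟨B, hB⟩
        refine ⟨A ∪ B, (isSub_latAlgGen _).2.1 g h ?_ ?_⟩
        · exact latAlgGen_mono (Set.image_mono
            (Finset.coe_subset.mpr Finset.subset_union_left)) hA
        · exact latAlgGen_mono (Set.image_mono
            (Finset.coe_subset.mpr Finset.subset_union_right)) hB
      · rintro c g ⟨A, hA⟩
        exact ⟨A, (isSub_latAlgGen _).2.2.1 c g hA⟩
      · rintro g h ⟨A, hA⟩ ⟨B, hB⟩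
        refine ⟨A ∪ B, (isSub_latAlgGen _).2.2.2.1 g h ?_ ?_⟩
        · exact latAlgGen_mono (Set.image_mono
            (Finset.coe_subset.mpr Finset.subset_union_left)) hA
        · exact latAlgGen_mono (Set.image_mono
            (Finset.coe_subset.mpr Finset.subset_union_right)) hB
      · rintro g h ⟨A, hA⟩ ⟨B, hB⟩
        refine ⟨A ∪ B, (isSub_latAlgGen _).2.2.2.2 g h ?_ ?_⟩
        · exact latAlgGen_mono (Set.image_mono
            (Finset.coe_subset.mpr Finset.subset_union_left)) hA
        · exact latAlgGen_mono (Set.image_mono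
            (Finset.coe_subset.mpr Finset.subset_union_right)) hB
    · rintro g ⟨x, rfl⟩
      exact ⟨{x}, subset_latAlgGen _ ⟨x, by simp, rfl⟩⟩
  exact hsub hf

lemma agree_on_span {A : Finset E} {f : (E →L[ℝ] ℝ) → ℝ}
    (hf : f ∈ latAlgGen (evalMapD E '' ↑A)) {φ ψ : E →L[ℝ] ℝ}
    (h : ∀ x ∈ Submodule.span ℝ (↑A : Set E), φ x = ψ x) : f φ = f ψ := by
  have hsub : latAlgGen (evalMapD E '' ↑A) ⊆ {g | g φ = g ψ} := by
    apply latAlgGen_le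
    · refine ⟨rfl, ?_, ?_, ?_, ?_⟩
      · intro g h' hg hh
        show (g + h') φ = (g + h') ψ
        simp only [Pi.add_apply]
        rw [hg, hh]
      · intro c g hg
        show (c • g) φ = (c • g) ψ
        simp only [Pi.smul_apply]
        rw [hg]
      · intro g h' hg hh
        show (g * h') φ = (g * h') ψ
        simp only [Pi.mul_apply]
        rw [hg, hh]
      · intro g h' hg hh
        show (g ⊔ h') φ = (g ⊔ h') ψ
        simp only [Pi.sup_apply]
        rw [hg, hh]
    · rintro _ ⟨x, hx, rfl⟩
      exact h x (Submodule.subset_span hx)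
  exact hsub hf

lemma cont_comp {M : Submodule ℝ E} (P : E →L[ℝ] ↥M) {f : (E →L[ℝ] ℝ) → ℝ}
    (hf : f ∈ freeVLA E) :
    Continuous fun t : ↥M →L[ℝ] ℝ => f (t.comp P) := by
  have hsub : freeVLA E ⊆ {g | Continuous fun t : ↥M →L[ℝ] ℝ => g (t.comp P)} := by
    apply latAlgGen_le
    · refine ⟨continuous_const, ?_, ?_, ?_, ?_⟩
      · intro g h hg hh
        exact Continuous.add (by exact hg) (by exact hh)
      · intro c g hg
        exact Continuous.const_smul (by exact hg) c
      · intro g h hg hh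
        exact Continuous.mul (by exact hg) (by exact hh)
      · intro g h hg hh
        exact Continuous.max (by exact hg) (by exact hh)
    · rintro _ ⟨x, rfl⟩
      show Continuous fun t : ↥M →L[ℝ] ℝ => t (P x)
      exact (ContinuousLinearMap.apply ℝ ℝ (P x)).continuous
  exact hsub hf

/-! ### the elements `q` and `R` of `V` -/

def qfun (M : Submodule ℝ E) (l : List ↥M) : (E →L[ℝ] ℝ) → ℝ :=
  fun φ => (l.map fun y : ↥M => |φ (y : E)|).foldr max 0

def rfun (M : Submodule ℝ E) (k : ℕ) (l : List ↥M) : (E →L[ℝ] ℝ) → ℝ :=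
  fun φ => (l.map fun y : ↥M => |φ (y : E)| ^ k).sum

lemma qfun_apply (M : Submodule ℝ E) (l : List ↥M) (φ : E →L[ℝ] ℝ) :
    qfun M l φ = (l.map fun y : ↥M => |φ (y : E)|).foldr max 0 := rfl

lemma rfun_apply (M : Submodule ℝ E) (k : ℕ) (l : List ↥M) (φ : E →L[ℝ] ℝ) :
    rfun M k l φ = (l.map fun y : ↥M => |φ (y : E)| ^ k).sum := rfl

lemma qfun_mem (M : Submodule ℝ E) (l : List ↥M) : qfun M l ∈ freeVLA E := by
  induction l with
  | nil => exact isSub_freeVLA.1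
  | cons y l ih =>
    have h := isSub_freeVLA.2.2.2.2 (fun φ => |evalMapD E (y : E) φ|) (qfun M l)
      (abs_mem isSub_freeVLA (delta_mem _)) ih
    have e : ((fun φ => |evalMapD E (y : E) φ|) ⊔ qfun M l) = qfun M (y :: l) := by
      funext φ
      simp only [Pi.sup_apply, qfun, List.map_cons, List.foldr_cons]
      rfl
    exact e ▸ h

lemma powabs_mem {g : (E →L[ℝ] ℝ) → ℝ} (hg : g ∈ freeVLA E) :
    ∀ k : ℕ, k ≠ 0 → (fun φ => |g φ| ^ k) ∈ freeVLA E := by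
  intro k
  induction k with
  | zero => intro h; exact absurd rfl h
  | succ k ih =>
    intro _
    rcases Nat.eq_zero_or_pos k with rfl | hk
    · have h := abs_mem isSub_freeVLA hg
      have e : (fun φ => |g φ|) = fun φ => |g φ| ^ 1 := by funext φ; rw [pow_one]
      exact e ▸ h
    · have ihk := ih hk.ne'
      have h := isSub_freeVLA.2.2.2.1 _ _ (abs_mem isSub_freeVLA hg) ihk
      have e : ((fun φ => |g φ|) * fun φ => |g φ| ^ k) = fun φ => |g φ| ^ (k + 1) := by
        funext φ
        simp only [Pi.mul_apply, pow_succ]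
        ring
      exact e ▸ h

lemma rfun_mem (M : Submodule ℝ E) {k : ℕ} (hk : k ≠ 0) (l : List ↥M) :
    rfun M k l ∈ freeVLA E := by
  induction l with
  | nil =>
    have e : (0 : (E →L[ℝ] ℝ) → ℝ) = rfun M k [] := by
      funext φ; simp [rfun]
    exact e ▸ isSub_freeVLA.1
  | cons y l ih =>
    have h := isSub_freeVLA.2.1 (fun φ => |evalMapD E (y : E) φ| ^ k) (rfun M k l)
      (powabs_mem (delta_mem _) k hk) ih
    have e : ((fun φ => |evalMapD E (y : E) φ| ^ k) + rfun M k l) = rfun M k (y :: l) := by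
      funext φ
      simp only [Pi.add_apply, rfun, List.map_cons, List.sum_cons]
      rfl
    exact e ▸ h

section Good2
variable {ν : {f : (E →L[ℝ] ℝ) → ℝ // f ∈ freeVLA E} → ℝ} (hν : IsGoodSeminorm E ν)
include hν

lemma nu_powabs_delta (y : E) :
    ∀ k : ℕ, k ≠ 0 → ∀ h : (fun φ : E →L[ℝ] ℝ => |φ y| ^ k) ∈ freeVLA E,
      ν ⟨fun φ => |φ y| ^ k, h⟩ ≤ ‖y‖ ^ k := by
  intro k
  induction k with
  | zero => intro h; exact absurd rfl h
  | succ k ih =>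
    intro _ h
    rcases Nat.eq_zero_or_pos k with rfl | hk
    · have e1 : ν ⟨fun φ : E →L[ℝ] ℝ => |φ y| ^ 1, h⟩
          = ν ⟨fun φ : E →L[ℝ] ℝ => |evalMapD E y φ|, abs_mem isSub_freeVLA (delta_mem y)⟩ := by
        apply nu_congr
        funext φ; rw [pow_one]; rfl
      rw [e1, nu_abs hν (delta_mem y), pow_one]
      exact hν.2.2.2.2.2 y (delta_mem y)
    · have hk0 := hk.ne'
      have ihk := ih hk0 (powabs_mem (delta_mem y) k hk0)
      have hmul : evalMapD E y * (fun φ : E →L[ℝ] ℝ => |φ y| ^ k) ∈ freeVLA E :=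
        isSub_freeVLA.2.2.2.1 _ _ (delta_mem y) (powabs_mem (delta_mem y) k hk0)
      have e2 : ν ⟨fun φ : E →L[ℝ] ℝ => |φ y| ^ (k + 1), h⟩
          ≤ ν ⟨evalMapD E y * (fun φ : E →L[ℝ] ℝ => |φ y| ^ k), hmul⟩ := by
        apply hν.2.2.2.1
        intro φ
        show |(|φ y| ^ (k + 1))| ≤ |evalMapD E y φ * |φ y| ^ k|
        have hd : evalMapD E y φ = φ y := rfl
        have ha1 : |(|φ y| ^ (k + 1))| = |φ y| ^ (k + 1) :=
          abs_of_nonneg (pow_nonneg (abs_nonneg _) _)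
        have ha2 : |φ y * |φ y| ^ k| = |φ y| ^ (k + 1) := by
          rw [abs_mul, abs_of_nonneg (pow_nonneg (abs_nonneg (φ y)) k), pow_succ, mul_comm]
        rw [hd, ha1, ha2]
      have e3 := hν.2.2.2.2.1 _ _ (delta_mem y) (powabs_mem (delta_mem y) k hk0) hmul
      have e4 := hν.2.2.2.2.2 y (delta_mem y)
      calc ν ⟨fun φ : E →L[ℝ] ℝ => |φ y| ^ (k + 1), h⟩
          ≤ ν ⟨evalMapD E y, delta_mem y⟩ * ν ⟨fun φ : E →L[ℝ] ℝ => |φ y| ^ k,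
            powabs_mem (delta_mem y) k hk0⟩ := le_trans e2 e3
        _ ≤ ‖y‖ * ‖y‖ ^ k := mul_le_mul e4 ihk (hν.1 _) (norm_nonneg y)
        _ = ‖y‖ ^ (k + 1) := by rw [pow_succ]; ring

lemma nu_rfun (M : Submodule ℝ E) {k : ℕ} (hk : k ≠ 0) (l : List ↥M)
    (hl : ∀ y ∈ l, ‖(y : E)‖ ≤ 1) :
    ν ⟨rfun M k l, rfun_mem M hk l⟩ ≤ l.length := by
  induction l with
  | nil =>
    have e : ν ⟨rfun M k [], rfun_mem M hk []⟩ = ν ⟨0, isSub_freeVLA.1⟩ := by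
      apply nu_congr; funext φ; simp [rfun]
    rw [e, nu_zero hν]
    simp
  | cons y l ih =>
    have hmem1 : (fun φ : E →L[ℝ] ℝ => |φ (y : E)| ^ k) ∈ freeVLA E :=
      powabs_mem (delta_mem _) k hk
    have hadd : ((fun φ : E →L[ℝ] ℝ => |φ (y : E)| ^ k) + rfun M k l) ∈ freeVLA E :=
      isSub_freeVLA.2.1 _ _ hmem1 (rfun_mem M hk l)
    have e : ν ⟨rfun M k (y :: l), rfun_mem M hk (y :: l)⟩
        = ν ⟨(fun φ : E →L[ℝ] ℝ => |φ (y : E)| ^ k) + rfun M k l, hadd⟩ := by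
      apply nu_congr
      funext φ
      simp only [Pi.add_apply, rfun, List.map_cons, List.sum_cons]
    rw [e]
    have h1 := hν.2.1 _ _ hmem1 (rfun_mem M hk l) hadd
    have h2 := nu_powabs_delta hν (y : E) k hk hmem1
    have h3 : ‖(y : E)‖ ^ k ≤ 1 := pow_le_one₀ (norm_nonneg _) (hl y (List.mem_cons_self))
    have h4 := ih (fun z hz => hl z (List.mem_cons_of_mem y hz))
    have h5 : ((y :: l).length : ℝ) = (l.length : ℝ) + 1 := by
      simp [List.length_cons]
    rw [h5]
    linarith

end Good2

lemma foldr_max_le_sum {L : List ℝ} (h : ∀ a ∈ L, 0 ≤ a) : L.foldr max 0 ≤ L.sum := by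
  induction L with
  | nil => simp
  | cons a L ih =>
    have hL : ∀ b ∈ L, 0 ≤ b := fun b hb => h b (List.mem_cons_of_mem a hb)
    have hsum : 0 ≤ L.sum := List.sum_nonneg hL
    have ha : 0 ≤ a := h a (List.mem_cons_self)
    simp only [List.foldr_cons, List.sum_cons]
    exact max_le (le_add_of_nonneg_right hsum) (le_trans (ih hL) (le_add_of_nonneg_left ha))

lemma nu_vanish {f : (E →L[ℝ] ℝ) → ℝ} (hf : f ∈ freeVLA E)
    (hvan : ∀ φ : E →L[ℝ] ℝ, ‖φ‖ ≤ 1 → f φ = 0)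
    {ν : {f : (E →L[ℝ] ℝ) → ℝ // f ∈ freeVLA E} → ℝ} (hν : IsGoodSeminorm E ν) :
    ν ⟨f, hf⟩ = 0 := by
  classical
  obtain ⟨A, hfA⟩ := exists_finset_gen hf
  set M : Submodule ℝ E := Submodule.span ℝ (↑A : Set E) with hM
  haveI hMfd : FiniteDimensional ℝ ↥M := by rw [hM]; infer_instance
  haveI : ProperSpace (↥M →L[ℝ] ℝ) := FiniteDimensional.proper ℝ (↥M →L[ℝ] ℝ)
  obtain ⟨P, hP⟩ := Submodule.ClosedComplemented.of_finiteDimensional (𝕜 := ℝ) M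
  set rst : (E →L[ℝ] ℝ) → (↥M →L[ℝ] ℝ) := fun φ => φ.comp M.subtypeL with hrst
  set F : (↥M →L[ℝ] ℝ) → ℝ := fun t => f (t.comp P) with hFdef
  have hdep : ∀ φ ψ : E →L[ℝ] ℝ, (∀ x : ↥M, φ x = ψ x) → f φ = f ψ := by
    intro φ ψ h
    exact agree_on_span hfA (fun x hx => h ⟨x, hx⟩)
  have hfF : ∀ φ, f φ = F (rst φ) := by
    intro φ
    apply hdep
    intro x
    show φ x = ((rst φ).comp P) x
    have h1 : ((rst φ).comp P) (x : E) = φ ((P x : ↥M) : E) := rfl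
    rw [h1, hP x]
  have hqrst : ∀ (l : List ↥M) (φ : E →L[ℝ] ℝ),
      (l.map fun y => |rst φ y|) = l.map fun y : ↥M => |φ (y : E)| := by
    intro l φ
    have h1 : (fun y : ↥M => |rst φ y|) = fun y : ↥M => |φ (y : E)| := rfl
    rw [h1]
  have hFcont : Continuous F := cont_comp P hf
  have hFvan : ∀ t : ↥M →L[ℝ] ℝ, ‖t‖ ≤ 1 → F t = 0 := by
    intro t ht
    obtain ⟨g, hg1, hg2⟩ := exists_extension_norm_eq M t
    have h0 : f g = 0 := hvan g (by rw [hg2]; exact ht)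
    have hgt : rst g = t := by
      ext x
      exact hg1 x
    rw [← hgt, ← hfF g]
    exact h0
  obtain ⟨l₀, hl01, hl02⟩ := covering E M (η := (1 : ℝ) / 2) (by norm_num)
  suffices hδδ : ∀ δ : ℝ, 0 < δ → ν ⟨f, hf⟩ ≤ δ * (2 * l₀.length) by
    rcases (hν.1 ⟨f, hf⟩).eq_or_lt with h | h
    · exact h.symm
    · exfalso
      set C : ℝ := 2 * l₀.length with hC
      have hC0 : (0 : ℝ) ≤ C := by positivity
      have h2 := hδδ (ν ⟨f, hf⟩ / (2 * (C + 1))) (by positivity)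
      have h3 : ν ⟨f, hf⟩ / (2 * (C + 1)) * C < ν ⟨f, hf⟩ := by
        rw [div_mul_eq_mul_div, div_lt_iff₀ (by positivity)]
        nlinarith
      linarith
  intro δ hδ
  obtain ⟨s, hs1, hs2, hs3⟩ := small_band (X := ↥M →L[ℝ] ℝ) hFcont hFvan (half_pos hδ)
  have hs0 : (0 : ℝ) < s := by linarith
  set η : ℝ := (1 - 1 / s) / 2 with hηdef
  have hsinv : 1 / s < 1 := by rw [div_lt_one hs0]; exact hs1
  have hsinv2 : (1 : ℝ) / 2 ≤ 1 / s := one_div_le_one_div_of_le hs0 hs2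
  have hη : 0 < η := by rw [hηdef]; linarith
  have hη4 : η ≤ 1 / 4 := by rw [hηdef]; linarith
  obtain ⟨l, hl1, hl2⟩ := covering E M hη
  set ρ : ℝ := (1 - η) * s with hρdef
  have hρeq : ρ = (s + 1) / 2 := by rw [hρdef, hηdef]; field_simp; ring
  have hρ1 : 1 < ρ := by rw [hρeq]; linarith
  have hρ0 : (0 : ℝ) < ρ := by linarith
  have hq_nonneg : ∀ φ, 0 ≤ qfun M l φ := fun φ => foldr_max_nonneg _
  have hq0_nonneg : ∀ φ, 0 ≤ qfun M l₀ φ := fun φ => foldr_max_nonneg _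
  have hkey : ∀ φ : E →L[ℝ] ℝ, qfun M l φ < ρ → |f φ| ≤ δ * qfun M l φ := by
    intro φ hq
    have ht' := hl2 (rst φ)
    rw [hqrst l φ] at ht'
    have ht'' : (1 - η) * ‖rst φ‖ ≤ qfun M l φ := by rw [qfun_apply]; exact ht'
    have h1η : (0 : ℝ) < 1 - η := by linarith
    have hnorm : ‖rst φ‖ < s := by
      by_contra h'
      push_neg at h'
      have h2 : (1 - η) * s ≤ (1 - η) * ‖rst φ‖ := mul_le_mul_of_nonneg_left h' h1η.le
      have h3 := le_trans h2 ht''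
      rw [← hρdef] at h3
      linarith
    have hFb := hs3 (rst φ) hnorm.le
    rw [hfF φ]
    rcases le_or_gt ‖rst φ‖ 1 with h1 | h1
    · rw [hFvan (rst φ) h1, abs_zero]
      exact mul_nonneg hδ.le (hq_nonneg φ)
    · have hq2 : 1 - η ≤ qfun M l φ := by
        have h2 := mul_le_mul_of_nonneg_left h1.le h1η.le
        calc 1 - η = (1 - η) * 1 := by ring
          _ ≤ (1 - η) * ‖rst φ‖ := h2
          _ ≤ qfun M l φ := ht''
      calc |F (rst φ)| ≤ δ / 2 := hFb
        _ ≤ δ * qfun M l φ := by nlinarith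
  -- V elements
  have hqmem := qfun_mem M l
  have habs : (fun φ => |f φ|) ∈ freeVLA E := abs_mem isSub_freeVLA hf
  set g1 : (E →L[ℝ] ℝ) → ℝ := (fun φ => |f φ|) + (-δ) • qfun M l with hg1def
  have hg1mem : g1 ∈ freeVLA E :=
    isSub_freeVLA.2.1 _ _ habs (isSub_freeVLA.2.2.1 _ _ hqmem)
  set f1 : (E →L[ℝ] ℝ) → ℝ := g1 ⊔ 0 with hf1def
  have hf1mem : f1 ∈ freeVLA E := isSub_freeVLA.2.2.2.2 _ _ hg1mem isSub_freeVLA.1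
  have hg1φ : ∀ φ, g1 φ = |f φ| - δ * qfun M l φ := by
    intro φ
    rw [hg1def]
    show |f φ| + ((-δ) • qfun M l) φ = _
    have h1 : ((-δ) • qfun M l) φ = -δ * qfun M l φ := rfl
    rw [h1]
    ring
  have hf1φ : ∀ φ, f1 φ = max (g1 φ) 0 := by
    intro φ
    rw [hf1def]
    rfl
  have hf1nonneg : ∀ φ, 0 ≤ f1 φ := by
    intro φ
    rw [hf1φ]
    exact le_max_right _ _
  have hfle : ∀ φ, |f φ| ≤ f1 φ + δ * qfun M l φ := by
    intro φ
    have h1 : g1 φ ≤ f1 φ := by rw [hf1φ]; exact le_max_left _ _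
    have h2 := hg1φ φ
    linarith
  have hsupp : ∀ φ, 0 < f1 φ → ρ ≤ qfun M l φ := by
    intro φ h
    by_contra h'
    push_neg at h'
    have hk2 := hkey φ h'
    have h3 : f1 φ = 0 := by
      rw [hf1φ]
      apply max_eq_right
      rw [hg1φ φ]
      linarith
    linarith
  -- choose K
  obtain ⟨k0, hk0⟩ := pow_unbounded_of_one_lt (l.length : ℝ) hρ1
  set K := k0 + 1 with hKdef
  have hK0 : K ≠ 0 := Nat.succ_ne_zero k0
  have hKineq : (l.length : ℝ) < ρ ^ K := by
    apply lt_of_lt_of_le hk0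
    rw [pow_succ]
    nlinarith [pow_pos hρ0 k0]
  have hρK : (0 : ℝ) < ρ ^ K := pow_pos hρ0 K
  have hRmem := rfun_mem M hK0 l
  have hRnonneg : ∀ φ, 0 ≤ rfun M K l φ := by
    intro φ
    apply List.sum_nonneg
    intro b hb
    obtain ⟨c, hc, rfl⟩ := List.mem_map.mp hb
    exact pow_nonneg (abs_nonneg _) K
  have hf1R : ∀ φ, f1 φ ≤ (ρ ^ K)⁻¹ * (f1 φ * rfun M K l φ) := by
    intro φ
    rcases (hf1nonneg φ).eq_or_lt with h | h
    · rw [← h, zero_mul, mul_zero]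
    · have hρq := hsupp φ h
      have hpow : ρ ^ K ≤ (qfun M l φ) ^ K := pow_le_pow_left₀ hρ0.le hρq K
      have hmapn : ∀ a ∈ l.map fun y : ↥M => |φ (y : E)|, (0 : ℝ) ≤ a := by
        rintro a ha
        obtain ⟨c, hc, rfl⟩ := List.mem_map.mp ha
        exact abs_nonneg _
      have hqR : (qfun M l φ) ^ K ≤ rfun M K l φ := by
        have hmap := foldr_max_pow_le_sum hmapn hK0
        rw [List.map_map] at hmap
        have hcomp : ((fun x : ℝ => x ^ K) ∘ fun y : ↥M => |φ (y : E)|)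
            = fun y : ↥M => |φ (y : E)| ^ K := rfl
        rw [hcomp] at hmap
        rw [qfun_apply, rfun_apply]
        exact hmap
      have e1 : f1 φ * ρ ^ K ≤ f1 φ * rfun M K l φ :=
        mul_le_mul_of_nonneg_left (le_trans hpow hqR) h.le
      calc f1 φ = (ρ ^ K)⁻¹ * (f1 φ * ρ ^ K) := by field_simp
        _ ≤ (ρ ^ K)⁻¹ * (f1 φ * rfun M K l φ) :=
          mul_le_mul_of_nonneg_left e1 (inv_nonneg.mpr hρK.le)
  -- ν f1 ≤ 0
  have hmulmem : f1 * rfun M K l ∈ freeVLA E := isSub_freeVLA.2.2.2.1 _ _ hf1mem hRmem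
  have hsmulmem : (ρ ^ K)⁻¹ • (f1 * rfun M K l) ∈ freeVLA E :=
    isSub_freeVLA.2.2.1 _ _ hmulmem
  have hn1 : ν ⟨f1, hf1mem⟩ ≤ ν ⟨(ρ ^ K)⁻¹ • (f1 * rfun M K l), hsmulmem⟩ := by
    apply hν.2.2.2.1
    intro φ
    show |f1 φ| ≤ |((ρ ^ K)⁻¹ • (f1 * rfun M K l)) φ|
    have hv : ((ρ ^ K)⁻¹ • (f1 * rfun M K l)) φ = (ρ ^ K)⁻¹ * (f1 φ * rfun M K l φ) := rfl
    rw [hv, abs_of_nonneg (hf1nonneg φ), abs_of_nonneg (mul_nonneg (inv_nonneg.mpr hρK.le)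
      (mul_nonneg (hf1nonneg φ) (hRnonneg φ)))]
    exact hf1R φ
  have hn2 : ν ⟨(ρ ^ K)⁻¹ • (f1 * rfun M K l), hsmulmem⟩
      = (ρ ^ K)⁻¹ * ν ⟨f1 * rfun M K l, hmulmem⟩ := by
    rw [hν.2.2.1 _ _ hmulmem hsmulmem, abs_of_nonneg (inv_nonneg.mpr hρK.le)]
  have hn3 := hν.2.2.2.2.1 _ _ hf1mem hRmem hmulmem
  have hn4 := nu_rfun hν M hK0 l hl1
  have hνf10 : ν ⟨f1, hf1mem⟩ ≤ 0 := by
    have hc1 : (ρ ^ K)⁻¹ * (l.length : ℝ) < 1 := by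
      have h1 := (div_lt_one hρK).mpr hKineq
      rw [div_eq_inv_mul] at h1
      exact h1
    have hch := hν.1 ⟨f1, hf1mem⟩
    have hchR := hν.1 ⟨rfun M K l, rfun_mem M hK0 l⟩
    have hchm := hν.1 ⟨f1 * rfun M K l, hmulmem⟩
    have hstep1 : ν ⟨f1, hf1mem⟩ ≤ (ρ ^ K)⁻¹ * (ν ⟨f1, hf1mem⟩ * ν ⟨rfun M K l, rfun_mem M hK0 l⟩) := by
      rw [hn2] at hn1
      exact le_trans hn1 (mul_le_mul_of_nonneg_left hn3 (inv_nonneg.mpr hρK.le))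
    have hstep2 : ν ⟨f1, hf1mem⟩ * ν ⟨rfun M K l, rfun_mem M hK0 l⟩
        ≤ ν ⟨f1, hf1mem⟩ * (l.length : ℝ) := mul_le_mul_of_nonneg_left hn4 hch
    have hstep3 : ν ⟨f1, hf1mem⟩ ≤ ((ρ ^ K)⁻¹ * (l.length : ℝ)) * ν ⟨f1, hf1mem⟩ := by
      calc ν ⟨f1, hf1mem⟩ ≤ (ρ ^ K)⁻¹ * (ν ⟨f1, hf1mem⟩ * ν ⟨rfun M K l, rfun_mem M hK0 l⟩) := hstep1
        _ ≤ (ρ ^ K)⁻¹ * (ν ⟨f1, hf1mem⟩ * (l.length : ℝ)) :=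
          mul_le_mul_of_nonneg_left hstep2 (inv_nonneg.mpr hρK.le)
        _ = ((ρ ^ K)⁻¹ * (l.length : ℝ)) * ν ⟨f1, hf1mem⟩ := by ring
    nlinarith
  -- ν q ≤ 2 len₀
  have h2mem : (2 : ℝ) • qfun M l₀ ∈ freeVLA E := isSub_freeVLA.2.2.1 _ _ (qfun_mem M l₀)
  have hνq : ν ⟨qfun M l, hqmem⟩ ≤ 2 * l₀.length := by
    have hlat : ν ⟨qfun M l, hqmem⟩ ≤ ν ⟨(2 : ℝ) • qfun M l₀, h2mem⟩ := by
      apply hν.2.2.2.1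
      intro φ
      have hql : qfun M l φ ≤ ‖rst φ‖ := by
        have hB : (0 : ℝ) ≤ ‖rst φ‖ := norm_nonneg (rst φ)
        rw [qfun_apply]
        apply foldr_max_le hB
        intro a ha
        obtain ⟨y, hy, rfl⟩ := List.mem_map.mp ha
        have h1 : |φ (y : E)| = ‖rst φ y‖ := (Real.norm_eq_abs _).symm
        rw [h1]
        have h2 := (rst φ).le_opNorm y
        have h3 : ‖y‖ ≤ 1 := hl1 y hy
        nlinarith [norm_nonneg (rst φ)]
      have hq0' := hl02 (rst φ)
      rw [hqrst l₀ φ] at hq0'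
      have hq0'' : (1 - 1 / 2) * ‖rst φ‖ ≤ qfun M l₀ φ := by rw [qfun_apply]; exact hq0'
      show |qfun M l φ| ≤ |((2 : ℝ) • qfun M l₀) φ|
      have e : ((2 : ℝ) • qfun M l₀) φ = 2 * qfun M l₀ φ := rfl
      rw [e, abs_of_nonneg (hq_nonneg φ),
        abs_of_nonneg (mul_nonneg (by norm_num) (hq0_nonneg φ))]
      linarith
    have h2 : ν ⟨(2 : ℝ) • qfun M l₀, h2mem⟩ = 2 * ν ⟨qfun M l₀, qfun_mem M l₀⟩ := by
      rw [hν.2.2.1 2 _ (qfun_mem M l₀) h2mem]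
      norm_num
    have hr1mem := rfun_mem M (k := 1) one_ne_zero l₀
    have h3 : ν ⟨qfun M l₀, qfun_mem M l₀⟩ ≤ ν ⟨rfun M 1 l₀, hr1mem⟩ := by
      apply hν.2.2.2.1
      intro φ
      have hmapn : ∀ a ∈ l₀.map fun y : ↥M => |φ (y : E)|, (0 : ℝ) ≤ a := by
        rintro a ha
        obtain ⟨c, hc, rfl⟩ := List.mem_map.mp ha
        exact abs_nonneg _
      have hfold := foldr_max_le_sum hmapn
      show |qfun M l₀ φ| ≤ |rfun M 1 l₀ φ|
      rw [qfun_apply, rfun_apply]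
      have hsum_nonneg : 0 ≤ rfun M 1 l₀ φ := by
        apply List.sum_nonneg
        intro b hb
        obtain ⟨c, hc, rfl⟩ := List.mem_map.mp hb
        exact pow_nonneg (abs_nonneg _) 1
      have hq0n : (0 : ℝ) ≤ (l₀.map fun y : ↥M => |φ (y : E)|).foldr max 0 :=
        foldr_max_nonneg _
      have hsn : (0 : ℝ) ≤ (l₀.map fun y : ↥M => |φ (y : E)| ^ 1).sum := by
        rw [rfun_apply] at hsum_nonneg; exact hsum_nonneg
      rw [abs_of_nonneg hq0n, abs_of_nonneg hsn]
      simp only [pow_one]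
      exact hfold
    have h4 := nu_rfun hν M one_ne_zero l₀ hl01
    have h5 := hν.1 ⟨qfun M l₀, qfun_mem M l₀⟩
    linarith
  -- final
  have hδqmem : δ • qfun M l ∈ freeVLA E := isSub_freeVLA.2.2.1 _ _ hqmem
  have haddmem : f1 + δ • qfun M l ∈ freeVLA E := isSub_freeVLA.2.1 _ _ hf1mem hδqmem
  have hfinal1 : ν ⟨f, hf⟩ = ν ⟨fun φ => |f φ|, habs⟩ := (nu_abs hν hf).symm
  have hfinal2 : ν ⟨fun φ => |f φ|, habs⟩ ≤ ν ⟨f1 + δ • qfun M l, haddmem⟩ := by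
    apply hν.2.2.2.1
    intro φ
    show |(|f φ|)| ≤ |(f1 + δ • qfun M l) φ|
    have e : (f1 + δ • qfun M l) φ = f1 φ + δ * qfun M l φ := rfl
    rw [e, abs_abs, abs_of_nonneg (add_nonneg (hf1nonneg φ)
      (mul_nonneg hδ.le (hq_nonneg φ)))]
    exact hfle φ
  have hfinal3 := hν.2.1 _ _ hf1mem hδqmem haddmem
  have hfinal4 : ν ⟨δ • qfun M l, hδqmem⟩ = δ * ν ⟨qfun M l, hqmem⟩ := by
    rw [hν.2.2.1 δ _ hqmem hδqmem, abs_of_nonneg hδ.le]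
  have hmul := mul_le_mul_of_nonneg_left hνq hδ.le
  rw [hfinal1]
  calc ν ⟨fun φ => |f φ|, habs⟩ ≤ ν ⟨f1 + δ • qfun M l, haddmem⟩ := hfinal2
    _ ≤ ν ⟨f1, hf1mem⟩ + ν ⟨δ • qfun M l, hδqmem⟩ := hfinal3
    _ ≤ 0 + δ * ν ⟨qfun M l, hqmem⟩ := by rw [hfinal4]; exact add_le_add hνf10 le_rfl
    _ ≤ δ * (2 * l₀.length) := by rw [zero_add]; exact hmul

lemma zero_good : IsGoodSeminorm E (fun _ : {f : (E →L[ℝ] ℝ) → ℝ // f ∈ freeVLA E} => (0 : ℝ)) := by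
  refine ⟨fun _ => le_rfl, fun _ _ _ _ _ => by norm_num, fun c _ _ _ => by norm_num,
    fun _ _ _ => le_rfl, fun _ _ _ _ _ => by norm_num, fun x _ => norm_nonneg x⟩

end Stmt3Aux

theorem stmt3 (E : Type) [NormedAddCommGroup E] [NormedSpace ℝ E] [CompleteSpace E]
    (f : {f : (E →L[ℝ] ℝ) → ℝ // f ∈ freeVLA E}) :
    BddAbove {r : ℝ | ∃ ν, IsGoodSeminorm E ν ∧ r = ν f} ∧
    (sSup {r : ℝ | ∃ ν, IsGoodSeminorm E ν ∧ r = ν f} = 0 ↔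
      ∀ φ : E →L[ℝ] ℝ, ‖φ‖ ≤ 1 → f.1 φ = 0) := by
  refine ⟨Stmt3Aux.bddAbove_nu f, ?_, ?_⟩
  · intro h φ hφ
    have h1 : Stmt3Aux.mu f ≤ 0 := by
      rw [← h]
      exact le_csSup (Stmt3Aux.bddAbove_nu f) ⟨Stmt3Aux.mu, Stmt3Aux.mu_good, rfl⟩
    have h2 := Stmt3Aux.le_mu f hφ
    exact abs_eq_zero.mp (le_antisymm (h2.trans h1) (abs_nonneg _))
  · intro h
    have hset : {r : ℝ | ∃ ν, IsGoodSeminorm E ν ∧ r = ν f} = {0} := by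
      apply Set.eq_singleton_iff_unique_mem.mpr
      constructor
      · exact ⟨fun _ => 0, Stmt3Aux.zero_good, rfl⟩
      · rintro r ⟨ν, hν, rfl⟩
        have hz := Stmt3Aux.nu_vanish f.2 h hν
        rw [Subtype.coe_eta] at hz
        exact hz
    rw [hset, csSup_singleton]
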